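/- (Euler's formula for arctangent as an asymptotic expansion.) For every natural number N, as t → 0 one has arctan t − ( t/(1+t²) ) · Σ_{k=0}^{N} ( 2^{2k} (k!)² / (2k+1)! ) · ( t² / (1+t²) )^{k} = O(t^{2N+1}). -/

import Mathlib

open Real Filter Asymptotics

noncomputable def eulerC (k : ℕ) : ℝ :=
  2 ^ (2 * k) * ((k.factorial : ℝ)) ^ 2 / ((2 * k + 1).factorial : ℝ)

lemma eulerC_nonneg (k : ℕ) : 0 ≤ eulerC k := by
  unfold eulerC; positivity

lemma eulerC_rec (k : ℕ) :
    eulerC (k + 1) * (2 * (k : ℝ) + 3) = eulerC k * (2 * (k : ℝ) + 2) := by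
  unfold eulerC
  have h1 : 2 * (k + 1) + 1 = (2 * k + 1) + 1 + 1 := by ring
  rw [h1, Nat.factorial_succ, Nat.factorial_succ, Nat.factorial_succ]
  have h2 : ((2 * k + 1).factorial : ℝ) ≠ 0 := by
    exact_mod_cast (Nat.factorial_pos _).ne'
  push_cast
  field_simp
  ring

lemma hasDerivU (m : ℕ) (t : ℝ) :
    HasDerivAt (fun t : ℝ => t ^ (2 * m + 1) / (1 + t ^ 2) ^ (m + 1))
      (((2 * m + 1) * t ^ (2 * m) - t ^ (2 * m + 2)) / (1 + t ^ 2) ^ (m + 2)) t := by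
  have hpos : (0 : ℝ) < 1 + t ^ 2 := by positivity
  have h1 : HasDerivAt (fun t : ℝ => t ^ (2 * m + 1))
      ((2 * m + 1 : ℕ) * t ^ (2 * m)) t := by
    simpa using hasDerivAt_pow (2 * m + 1) t
  have hb : HasDerivAt (fun t : ℝ => 1 + t ^ 2) (2 * t) t := by
    simpa using (hasDerivAt_pow 2 t).const_add 1
  have h2 : HasDerivAt (fun t : ℝ => (1 + t ^ 2) ^ (m + 1))
      ((m + 1 : ℕ) * (1 + t ^ 2) ^ m * (2 * t)) t := hb.pow (m + 1)
  have h := h1.div h2 (pow_ne_zero _ hpos.ne')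
  refine h.congr_deriv (Eq.symm ?_)
  push_cast
  field_simp
  ring

noncomputable def eulerF (N : ℕ) : ℝ → ℝ := fun t =>
  Real.arctan t - ∑ k ∈ Finset.range (N + 1),
    eulerC k * (t ^ (2 * k + 1) / (1 + t ^ 2) ^ (k + 1))

lemma hasDerivF (N : ℕ) (t : ℝ) :
    HasDerivAt (eulerF N)
      ((2 * N + 2) * eulerC N * t ^ (2 * N + 2) / (1 + t ^ 2) ^ (N + 2)) t := by
  have hpos : (0 : ℝ) < 1 + t ^ 2 := by positivity
  induction N with
  | zero =>
      have hc0 : eulerC 0 = 1 := by simp [eulerC]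
      have h := (Real.hasDerivAt_arctan t).sub
        ((hasDerivU 0 t).const_mul (eulerC 0))
      have hfun : eulerF 0 = fun s : ℝ =>
          Real.arctan s - eulerC 0 * (s ^ (2 * 0 + 1) / (1 + s ^ 2) ^ (0 + 1)) := by
        funext s; simp [eulerF]
      rw [hfun]
      refine h.congr_deriv (Eq.symm ?_)
      rw [hc0]
      field_simp
      ring
  | succ n ih =>
      have hfun : eulerF (n + 1) = fun s : ℝ =>
          eulerF n s - eulerC (n + 1) *
            (s ^ (2 * (n + 1) + 1) / (1 + s ^ 2) ^ ((n + 1) + 1)) := by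
        funext s; simp [eulerF, Finset.sum_range_succ]; ring
      rw [hfun]
      have h := ih.sub ((hasDerivU (n + 1) t).const_mul (eulerC (n + 1)))
      refine h.congr_deriv (Eq.symm ?_)
      have hrec := eulerC_rec n
      have h3 : (2 * (n : ℝ) + 3) ≠ 0 := by positivity
      have he : eulerC (n + 1) = eulerC n * (2 * (n : ℝ) + 2) / (2 * (n : ℝ) + 3) := by
        rw [eq_div_iff h3, hrec]
      rw [he]
      push_cast
      field_simp
      ring

lemma eulerF_bound (N : ℕ) (t : ℝ) :
    ‖eulerF N t‖ ≤ (2 * N + 2) * eulerC N * |t| ^ (2 * N + 2) * |t| := by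
  have hF0 : eulerF N 0 = 0 := by
    have : ∀ k ∈ Finset.range (N + 1),
        eulerC k * ((0:ℝ) ^ (2 * k + 1) / (1 + (0:ℝ) ^ 2) ^ (k + 1)) = 0 := by
      intro k _; simp
    simp [eulerF, Finset.sum_eq_zero this]
  have key := Convex.norm_image_sub_le_of_norm_hasDerivWithin_le
    (f := eulerF N)
    (f' := fun x => (2 * N + 2) * eulerC N * x ^ (2 * N + 2) / (1 + x ^ 2) ^ (N + 2))
    (s := Set.uIcc 0 t)
    (C := (2 * N + 2) * eulerC N * |t| ^ (2 * N + 2))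
    (fun x _ => (hasDerivF N x).hasDerivWithinAt)
    (fun x hx => by
      have hxt : |x| ≤ |t| := by
        rcases Set.mem_uIcc.mp hx with ⟨h1, h2⟩ | ⟨h1, h2⟩ <;> rw [abs_le] <;>
          constructor <;> nlinarith [abs_nonneg t, le_abs_self t, neg_abs_le t]
      have h1 : (1 : ℝ) ≤ (1 + x ^ 2) ^ (N + 2) :=
        one_le_pow₀ (by nlinarith [sq_nonneg x] : (1:ℝ) ≤ 1 + x ^ 2)
      have hxp : |x| ^ (2 * N + 2) ≤ |t| ^ (2 * N + 2) :=
        pow_le_pow_left₀ (abs_nonneg x) hxt _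
      rw [Real.norm_eq_abs, abs_div, abs_mul, abs_mul]
      have hden : |(1 + x ^ 2) ^ (N + 2)| = (1 + x ^ 2) ^ (N + 2) := abs_of_pos (by positivity)
      rw [hden, abs_pow]
      have hnn : (0:ℝ) ≤ |2 * (N:ℝ) + 2| * |eulerC N| * |x| ^ (2 * N + 2) := by positivity
      calc |2 * (N:ℝ) + 2| * |eulerC N| * |x| ^ (2 * N + 2) / (1 + x ^ 2) ^ (N + 2)
          ≤ |2 * (N:ℝ) + 2| * |eulerC N| * |x| ^ (2 * N + 2) / 1 :=
            div_le_div_of_nonneg_left hnn one_pos h1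
        _ = (2 * N + 2) * eulerC N * |x| ^ (2 * N + 2) := by
            rw [div_one, abs_of_nonneg (by positivity : (0:ℝ) ≤ 2 * (N:ℝ) + 2),
              abs_of_nonneg (eulerC_nonneg N)]
        _ ≤ (2 * N + 2) * eulerC N * |t| ^ (2 * N + 2) := by
            exact mul_le_mul_of_nonneg_left hxp (mul_nonneg (by positivity) (eulerC_nonneg N)))
    (convex_uIcc 0 t) Set.left_mem_uIcc Set.right_mem_uIcc
  simpa [hF0] using key

lemma eulerF_eq (N : ℕ) (t : ℝ) :
    Real.arctan t - (t / (1 + t ^ 2)) * ∑ k ∈ Finset.range (N + 1),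
        ((2 : ℝ) ^ (2 * k) * ((k.factorial : ℝ)) ^ 2 / ((2 * k + 1).factorial : ℝ)) *
          (t ^ 2 / (1 + t ^ 2)) ^ k = eulerF N t := by
  unfold eulerF
  congr 1
  rw [Finset.mul_sum]
  refine Finset.sum_congr rfl fun k _ => ?_
  have hpos : (0 : ℝ) < 1 + t ^ 2 := by positivity
  rw [show ((2 : ℝ) ^ (2 * k) * ((k.factorial : ℝ)) ^ 2 / ((2 * k + 1).factorial : ℝ))
      = eulerC k from rfl]
  rw [div_pow, ← pow_mul]
  field_simp
  ring

/-- **Euler's formula for arctangent** as an asymptotic expansion: for every `N`,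
`arctan t = (t/(1+t²)) Σ_{k=0}^{N} (2^{2k}(k!)²/(2k+1)!) (t²/(1+t²))^k + O(t^{2N+1})`
as `t → 0`. -/
theorem arctan_euler_expansion (N : ℕ) :
    (fun t : ℝ => Real.arctan t -
        (t / (1 + t ^ 2)) * ∑ k ∈ Finset.range (N + 1),
          ((2 : ℝ) ^ (2 * k) * ((k.factorial : ℝ)) ^ 2 / ((2 * k + 1).factorial : ℝ)) *
            (t ^ 2 / (1 + t ^ 2)) ^ k)
      =O[nhds 0] fun t : ℝ => t ^ (2 * N + 1) := by
  rw [isBigO_iff]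
  refine ⟨(2 * N + 2) * eulerC N, ?_⟩
  filter_upwards [Metric.ball_mem_nhds (0 : ℝ) one_pos] with t ht
  rw [Metric.mem_ball, Real.dist_eq, sub_zero] at ht
  rw [eulerF_eq N t]
  have hb := eulerF_bound N t
  have hC : (0 : ℝ) ≤ (2 * N + 2) * eulerC N := mul_nonneg (by positivity) (eulerC_nonneg N)
  have h1 : |t| ^ (2 * N + 2) * |t| ≤ |t| ^ (2 * N + 1) := by
    have : |t| ^ (2 * N + 2) * |t| = |t| ^ (2 * N + 1) * |t| ^ 2 := by ring
    rw [this]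
    calc |t| ^ (2 * N + 1) * |t| ^ 2 ≤ |t| ^ (2 * N + 1) * 1 := by
          apply mul_le_mul_of_nonneg_left _ (by positivity)
          nlinarith [abs_nonneg t]
      _ = |t| ^ (2 * N + 1) := mul_one _
  calc ‖eulerF N t‖ ≤ (2 * N + 2) * eulerC N * |t| ^ (2 * N + 2) * |t| := hb
    _ = (2 * N + 2) * eulerC N * (|t| ^ (2 * N + 2) * |t|) := by ring
    _ ≤ (2 * N + 2) * eulerC N * |t| ^ (2 * N + 1) :=
        mul_le_mul_of_nonneg_left h1 hC
    _ = (2 * N + 2) * eulerC N * ‖t ^ (2 * N + 1)‖ := by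
        rw [Real.norm_eq_abs, abs_pow]
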